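/- Let $\phi \colon H \to G$ be an injective virtual endomorphism of a group $G$ (i.e., $H \leq G$ has finite index and $\phi$ is an injective homomorphism), let $D = \{q_x \mid x \in X\}$ be a transversal for the left cosets $G/H$, and let $(G,X)$ be the associated self-similar action defined by: for $g \in G$, $x \in X$, $g(x) = y$ where $y$ is the unique letter with $gq_x \in q_yH$, and $g|_x = \phi(q_y^{-1} g q_x)$. Then there is no $g \in G \setminus \{1_G\}$ and $x \in X$ with $g(x) = x$ and $g|_x = 1_G$; consequently, there is no $g \neq 1_G$ and nonempty word $w \in X^*$ with $g(w) = w$ and $g|_w = 1_G$, and the monoid $X^* \bowtie G$ is right cancellative. -/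
import Mathlib


/-- The action on words induced by a letter-level self-similar action. -/
def actW {G X : Type*} (actL : G → X → X) (resL : G → X → G) : G → List X → List X
  | _, [] => []
  | g, x :: w => actL g x :: actW actL resL (resL g x) w

/-- The restriction (cocycle) on words induced by a letter-level self-similar action. -/
def resW {G X : Type*} (actL : G → X → X) (resL : G → X → G) : G → List X → G
  | g, [] => g
  | g, x :: w => resW actL resL (resL g x) w

/-- Zappa–Szép multiplication `(v,g)(w,h) = (v g(w), g|_w h)` on `List X × G`. -/
def zsMulW {G X : Type*} [Group G] (actL : G → X → X) (resL : G → X → G)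
    (p q : List X × G) : List X × G :=
  (p.1 ++ actW actL resL p.2 q.1, resW actL resL p.2 q.1 * q.2)

/-- For the self-similar action associated to an injective virtual endomorphism `φ : H → G`
via a transversal `q : X → G`, there is no `g ≠ 1` with `g(x) = x` and `g|_x = 1`, no `g ≠ 1`
fixing a nonempty word with trivial restriction, and `X* ⋈ G` is right cancellative. -/
theorem virtualEndo_rightCancellative (G : Type*) [Group G] (H : Subgroup G)
    [H.FiniteIndex] (φ : H →* G) (hφ : Function.Injective φ)
    (X : Type*) (q : X → G)
    (htrans : ∀ g : G, ∃! y : X, (q y)⁻¹ * g ∈ H)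
    (actL : G → X → X) (resL : G → X → G)
    (hact : ∀ g x, (q (actL g x))⁻¹ * (g * q x) ∈ H)
    (hres : ∀ g x, resL g x = φ ⟨(q (actL g x))⁻¹ * (g * q x), hact g x⟩) :
    (∀ g : G, ∀ x : X, actL g x = x → resL g x = 1 → g = 1) ∧
    (∀ g : G, ∀ w : List X, w ≠ [] → actW actL resL g w = w →
      resW actL resL g w = 1 → g = 1) ∧
    (∀ s t u : List X × G, zsMulW actL resL s u = zsMulW actL resL t u → s = t) := by
  -- uniqueness from the transversal property
  have huniq : ∀ g : G, ∀ y z : X, (q y)⁻¹ * g ∈ H → (q z)⁻¹ * g ∈ H → y = z := by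
    intro g y z hy hz
    obtain ⟨u, _, hu⟩ := htrans g
    exact (hu y hy).trans (hu z hz).symm
  -- letter-level triviality
  have hL : ∀ g : G, ∀ x : X, actL g x = x → resL g x = 1 → g = 1 := by
    intro g x hx hr
    rw [hres] at hr
    have h1 : ((q (actL g x))⁻¹ * (g * q x) : G) = 1 := by
      have := hφ (hr.trans (map_one φ).symm)
      exact congrArg Subtype.val this
    rw [hx] at h1
    have h2 : g * q x = q x := by
      have := congrArg (fun t => q x * t) h1
      simpa [mul_assoc] using this
    have h3 : g * q x = 1 * q x := by simpa using h2
    exact mul_right_cancel h3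
  -- cocycle laws for letters
  have hactmul : ∀ (g h : G) (x : X), actL (g * h) x = actL g (actL h x) := by
    intro g h x
    apply huniq (g * h * q x)
    · simpa [mul_assoc] using hact (g * h) x
    · have h1 := hact h x
      have h2 := hact g (actL h x)
      have := H.mul_mem h2 h1
      simpa [mul_assoc] using this
  have hresmul : ∀ (g h : G) (x : X), resL (g * h) x = resL g (actL h x) * resL h x := by
    intro g h x
    rw [hres, hres, hres, ← map_mul]
    congr 1
    apply Subtype.ext
    simp only [Subgroup.coe_mul]
    rw [hactmul]
    simp [mul_assoc]
  -- cocycle laws for words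
  have actW_mul : ∀ (w : List X) (g h : G),
      actW actL resL (g * h) w = actW actL resL g (actW actL resL h w) := by
    intro w
    induction w with
    | nil => intro g h; rfl
    | cons x w ih =>
      intro g h
      simp [actW, hactmul, hresmul, ih]
  have resW_mul : ∀ (w : List X) (g h : G),
      resW actL resL (g * h) w = resW actL resL g (actW actL resL h w) * resW actL resL h w := by
    intro w
    induction w with
    | nil => intro g h; rfl
    | cons x w ih =>
      intro g h
      simp [actW, resW, hresmul, ih]
  have actW_len : ∀ (w : List X) (g : G), (actW actL resL g w).length = w.length := by
    intro w
    induction w with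
    | nil => intro g; rfl
    | cons x w ih => intro g; simp [actW, ih]
  -- word-level triviality
  have hW : ∀ g : G, ∀ w : List X, w ≠ [] → actW actL resL g w = w →
      resW actL resL g w = 1 → g = 1 := by
    intro g w
    induction w generalizing g with
    | nil => intro h; exact absurd rfl h
    | cons x w ih =>
      intro _ ha hr
      rw [show actW actL resL g (x :: w) = actL g x :: actW actL resL (resL g x) w from rfl]
        at ha
      obtain ⟨hx, hw⟩ := List.cons.injEq .. ▸ ha
      have hr' : resW actL resL (resL g x) w = 1 := hr
      have hrx : resL g x = 1 := by
        rcases eq_or_ne w [] with rfl | hne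
        · simpa [resW] using hr'
        · exact ih (resL g x) hne hw hr'
      exact hL g x hx hrx
  refine ⟨hL, hW, ?_⟩
  -- right cancellativity
  rintro ⟨v, g⟩ ⟨v', g'⟩ ⟨w, h'⟩ h
  simp only [zsMulW, Prod.mk.injEq] at h
  obtain ⟨h1, h2⟩ := h
  have hresw : resW actL resL g w = resW actL resL g' w := mul_right_cancel h2
  have hlen : v.length = v'.length := by
    have := congrArg List.length h1
    simpa [actW_len] using this
  obtain ⟨hv, ha⟩ := List.append_inj h1 hlen
  subst hv
  rcases eq_or_ne w [] with rfl | hne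
  · have : g = g' := hresw
    simp [this]
  · have hne' : actW actL resL g w ≠ [] := by
      intro hc
      have := congrArg List.length hc
      simp [actW_len] at this
      exact hne this
    have hfix : actW actL resL (g' * g⁻¹) (actW actL resL g w) = actW actL resL g w := by
      rw [← actW_mul]
      simpa using ha.symm
    have hres1 : resW actL resL (g' * g⁻¹) (actW actL resL g w) = 1 := by
      have := resW_mul w (g' * g⁻¹) g
      rw [show g' * g⁻¹ * g = g' by group] at this
      rw [← hresw] at this
      have h3 : resW actL resL (g' * g⁻¹) (actW actL resL g w) * resW actL resL g w
          = 1 * resW actL resL g w := by simpa using this.symm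
      exact mul_right_cancel h3
    have : g' * g⁻¹ = 1 := hW _ _ hne' hfix hres1
    have hg : g' = g := by
      have := mul_eq_one_iff_eq_inv.mp this
      simpa using this
    simp [hg]
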